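/- (Regression identity underlying Theorem 2, part 1, complex scenario.) Let (Ω, F, P) be a probability space on a standard Borel space, let X₁ and X₂ be real-valued integrable random variables, V an ℝᵈ-valued random variable, and ε₀, ε₁, ε₂ integrable real-valued random variables. Assume: ε₁ is conditionally independent of the pair (X₁, X₂) given σ(V); ε₂ is conditionally independent of the pair (X₁, V) given σ(X₂); and ε₀ is conditionally independent of X₁ given σ(V, X₂). Let Y = β₀ + β₁·X₁ + ε₀ + ε₁ + ε₂ for real constants β₀, β₁. Then E[Y | σ(X₁, X₂, V)] = β₀ + β₁·X₁ + E[ε₁ | σ(V)] + E[ε₂ | σ(X₂)] + E[ε₀ | σ(V, X₂)] almost surely. -/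

import Mathlib

open MeasureTheory ProbabilityTheory

namespace Stmt10Aux

variable {Ω : Type*}

lemma comap_prodMk {α β : Type*} {mα : MeasurableSpace α} {mβ : MeasurableSpace β}
    (a : Ω → α) (b : Ω → β) :
    MeasurableSpace.comap (fun ω => (a ω, b ω)) inferInstance
      = MeasurableSpace.comap a mα ⊔ MeasurableSpace.comap b mβ := by
  have h : (inferInstance : MeasurableSpace (α × β))
      = mα.comap Prod.fst ⊔ mβ.comap Prod.snd := rfl
  rw [h, MeasurableSpace.comap_sup, MeasurableSpace.comap_comp, MeasurableSpace.comap_comp]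
  rfl

lemma core {m : MeasurableSpace Ω} {mΩ : MeasurableSpace Ω} [StandardBorelSpace Ω]
    {μ : Measure Ω} [IsProbabilityMeasure μ]
    {γ : Type*} {mγ : MeasurableSpace γ}
    (hm : m ≤ mΩ)
    {f : Ω → ℝ} {g : Ω → γ} (hfm : Measurable f) (hgm : Measurable g)
    (hfint : Integrable f μ) (hCI : CondIndepFun m hm f g μ)
    {A : Set Ω} (hA : MeasurableSet[m] A) {t : Set γ} (ht : MeasurableSet t) :
    ∫ x in A ∩ g ⁻¹' t, (μ[f|m]) x ∂μ = ∫ x in A ∩ g ⁻¹' t, f x ∂μ := by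
  have hCI' := (condIndepFun_iff_condExp_inter_preimage_eq_mul hfm hgm).mp hCI
  have hE : MeasurableSet (g ⁻¹' t) := hgm ht
  have hAΩ : MeasurableSet A := hm _ hA
  set E : Set Ω := g ⁻¹' t with hEdef
  set Z : Ω → ℝ := μ[E.indicator (fun _ => (1:ℝ)) | m] with hZdef
  have hZsm : StronglyMeasurable[m] Z := stronglyMeasurable_condExp
  have hZmeas : Measurable Z := hZsm.measurable.mono hm le_rfl
  have hZint : Integrable Z μ := integrable_condExp
  have hindE : Integrable (E.indicator fun _ => (1:ℝ)) μ := (integrable_const 1).indicator hE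
  have hZ0 : 0 ≤ᵐ[μ] Z :=
    condExp_nonneg (Filter.Eventually.of_forall fun x =>
      Set.indicator_nonneg (fun _ _ => zero_le_one) x)
  have hZ1 : Z ≤ᵐ[μ] fun _ => (1:ℝ) := by
    have h := condExp_mono (μ := μ) (m := m) hindE (integrable_const (1:ℝ))
      (Filter.Eventually.of_forall fun x =>
        Set.indicator_le_self' (fun _ _ => zero_le_one) x)
    rwa [condExp_const hm] at h
  -- Step 1
  have step1 : ∀ s : Set ℝ, MeasurableSet s →
      μ (f ⁻¹' s ∩ (A ∩ E)) = ENNReal.ofReal (∫ x in f ⁻¹' s ∩ A, Z x ∂μ) := by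
    intro s hs
    have hfs : MeasurableSet (f ⁻¹' s) := hfm hs
    have hindfsE : Integrable ((f ⁻¹' s ∩ E).indicator fun _ => (1:ℝ)) μ :=
      (integrable_const 1).indicator (hfs.inter hE)
    have hindfs : Integrable ((f ⁻¹' s).indicator fun _ => (1:ℝ)) μ :=
      (integrable_const 1).indicator hfs
    have hZind : Integrable (fun x => Z x * (f ⁻¹' s).indicator (fun _ => (1:ℝ)) x) μ := by
      refine hZint.mono ((hZmeas.mul (measurable_one.indicator hfs)).aestronglyMeasurable) ?_
      refine Filter.Eventually.of_forall fun x => ?_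
      rw [norm_mul]
      refine mul_le_of_le_one_right (norm_nonneg _) ?_
      by_cases hx : x ∈ f ⁻¹' s <;> simp [hx]
    have e1 : ∫ x in A, ((f ⁻¹' s ∩ E).indicator fun _ => (1:ℝ)) x ∂μ
        = (μ (f ⁻¹' s ∩ (A ∩ E))).toReal := by
      have hset : A ∩ (f ⁻¹' s ∩ E) = f ⁻¹' s ∩ (A ∩ E) := by
        ext x; simp only [Set.mem_inter_iff]; tauto
      rw [setIntegral_indicator (hfs.inter hE), hset, setIntegral_const, smul_eq_mul, mul_one, measureReal_def]
    have e2 : ∫ x in A, ((f ⁻¹' s ∩ E).indicator fun _ => (1:ℝ)) x ∂μ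
        = ∫ x in A, (μ⟦f ⁻¹' s ∩ E | m⟧) x ∂μ := (setIntegral_condExp hm hindfsE hA).symm
    have e3 : ∫ x in A, (μ⟦f ⁻¹' s ∩ E | m⟧) x ∂μ
        = ∫ x in A, (μ⟦f ⁻¹' s | m⟧) x * Z x ∂μ := by
      refine setIntegral_congr_ae hAΩ ?_
      filter_upwards [hCI' s t hs ht] with x hx _
      exact hx
    have hmul := condExp_mul_of_stronglyMeasurable_left (μ := μ) hZsm hZind hindfs
    have e4 : ∫ x in A, (μ⟦f ⁻¹' s | m⟧) x * Z x ∂μ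
        = ∫ x in A, (μ[(fun x => Z x * (f ⁻¹' s).indicator (fun _ => (1:ℝ)) x)|m]) x ∂μ := by
      refine setIntegral_congr_ae hAΩ ?_
      filter_upwards [hmul] with x hx _
      exact (hx.trans (mul_comm _ _)).symm
    have e5 : ∫ x in A, (μ[(fun x => Z x * (f ⁻¹' s).indicator (fun _ => (1:ℝ)) x)|m]) x ∂μ
        = ∫ x in A, Z x * (f ⁻¹' s).indicator (fun _ => (1:ℝ)) x ∂μ :=
      setIntegral_condExp hm hZind hA
    have e6 : ∫ x in A, Z x * (f ⁻¹' s).indicator (fun _ => (1:ℝ)) x ∂μ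
        = ∫ x in f ⁻¹' s ∩ A, Z x ∂μ := by
      have hpt : ∀ x, Z x * (f ⁻¹' s).indicator (fun _ => (1:ℝ)) x
          = (f ⁻¹' s).indicator Z x := by
        intro x; by_cases hx : x ∈ f ⁻¹' s <;> simp [hx]
      simp_rw [hpt]
      rw [setIntegral_indicator hfs, Set.inter_comm]
    have hreal : (μ (f ⁻¹' s ∩ (A ∩ E))).toReal = ∫ x in f ⁻¹' s ∩ A, Z x ∂μ := by
      rw [← e1, e2, e3, e4, e5, e6]
    rw [← hreal, ENNReal.ofReal_toReal (measure_ne_top μ _)]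
  -- Step 2 : equality of image measures
  set Z' : Ω → NNReal := fun x => (Z x).toNNReal with hZ'def
  have hZ'meas : Measurable Z' := hZmeas.real_toNNReal
  have hmap : Measure.map f (μ.restrict (A ∩ E))
      = Measure.map f ((μ.restrict A).withDensity (fun x => (Z' x : ENNReal))) := by
    ext s hs
    rw [Measure.map_apply hfm hs, Measure.map_apply hfm hs,
      Measure.restrict_apply (hfm hs), withDensity_apply _ (hfm hs),
      Measure.restrict_restrict (hfm hs), step1 s hs,
      ofReal_integral_eq_lintegral_ofReal (hZint.integrableOn) (ae_restrict_of_ae hZ0)]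
    rfl
  -- Step 3
  have hint1 : ∫ x in A ∩ E, f x ∂μ = ∫ x in A, Z x * f x ∂μ := by
    have h1 : ∫ x in A ∩ E, f x ∂μ
        = ∫ y, y ∂(Measure.map f (μ.restrict (A ∩ E))) :=
      (integral_map hfm.aemeasurable aestronglyMeasurable_id).symm
    have h2 : ∫ y, y ∂(Measure.map f ((μ.restrict A).withDensity (fun x => (Z' x : ENNReal))))
        = ∫ x, f x ∂((μ.restrict A).withDensity (fun x => (Z' x : ENNReal))) :=
      integral_map hfm.aemeasurable aestronglyMeasurable_id
    rw [h1, hmap, h2, integral_withDensity_eq_integral_smul hZ'meas]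
    refine setIntegral_congr_ae hAΩ ?_
    filter_upwards [hZ0] with x hx0 _
    simp [NNReal.smul_def, Z', Real.coe_toNNReal _ hx0]
  have hZf : Integrable (fun x => Z x * f x) μ := by
    refine hfint.mono ((hZmeas.mul hfm).aestronglyMeasurable) ?_
    filter_upwards [hZ0, hZ1] with x h0 h1
    rw [norm_mul]
    refine mul_le_of_le_one_left (norm_nonneg _) ?_
    rw [Real.norm_eq_abs, abs_of_nonneg h0]
    exact h1
  have hmulf := condExp_mul_of_stronglyMeasurable_left (μ := μ) hZsm hZf hfint
  have hint2 : ∫ x in A, Z x * f x ∂μ = ∫ x in A, Z x * (μ[f|m]) x ∂μ := by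
    rw [← setIntegral_condExp hm hZf hA]
    refine setIntegral_congr_ae hAΩ ?_
    filter_upwards [hmulf] with x hx _
    exact hx
  have hhm : StronglyMeasurable[m] (μ[f|m]) := stronglyMeasurable_condExp
  have hhind : Integrable (fun x => (μ[f|m]) x * E.indicator (fun _ => (1:ℝ)) x) μ := by
    refine (integrable_condExp (m := m) (μ := μ) (f := f)).mono
      (((hhm.measurable.mono hm le_rfl).mul (measurable_one.indicator hE)).aestronglyMeasurable) ?_
    refine Filter.Eventually.of_forall fun x => ?_
    rw [norm_mul]
    refine mul_le_of_le_one_right (norm_nonneg _) ?_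
    by_cases hx : x ∈ E <;> simp [hx]
  have hmulh := condExp_mul_of_stronglyMeasurable_left (μ := μ) hhm hhind hindE
  have hint3 : ∫ x in A ∩ E, (μ[f|m]) x ∂μ = ∫ x in A, Z x * (μ[f|m]) x ∂μ := by
    have e1 : ∫ x in A ∩ E, (μ[f|m]) x ∂μ = ∫ x in A, E.indicator (μ[f|m]) x ∂μ := by
      rw [setIntegral_indicator hE]
    have e2 : ∀ x, E.indicator (μ[f|m]) x
        = (μ[f|m]) x * E.indicator (fun _ => (1:ℝ)) x := by
      intro x; by_cases hx : x ∈ E <;> simp [hx]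
    rw [e1]
    simp_rw [e2]
    rw [← setIntegral_condExp hm hhind hA]
    refine setIntegral_congr_ae hAΩ ?_
    filter_upwards [hmulh] with x hx _
    exact hx.trans (mul_comm _ _)
  rw [hint3, hint1, hint2]


lemma condexp_sup_comap {m m₂ : MeasurableSpace Ω} {mΩ : MeasurableSpace Ω}
    [StandardBorelSpace Ω] {μ : Measure Ω} [IsProbabilityMeasure μ]
    {γ : Type*} {mγ : MeasurableSpace γ} (hm : m ≤ mΩ)
    {f : Ω → ℝ} {g : Ω → γ} (hfm : Measurable f) (hgm : Measurable g)
    (hfint : Integrable f μ) (hCI : CondIndepFun m hm f g μ)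
    (hm₂eq : m₂ = m ⊔ MeasurableSpace.comap g mγ) :
    μ[f | m₂] =ᵐ[μ] μ[f | m] := by
  have hle1 : m ≤ m₂ := by rw [hm₂eq]; exact le_sup_left
  have hle2 : MeasurableSpace.comap g mγ ≤ m₂ := by rw [hm₂eq]; exact le_sup_right
  have hm₂ : m₂ ≤ mΩ := by rw [hm₂eq]; exact sup_le hm hgm.comap_le
  set p : Set (Set Ω) :=
    {u | ∃ A tt, MeasurableSet[m] A ∧ MeasurableSet tt ∧ u = A ∩ g ⁻¹' tt} with hpdef
  have hgen : m₂ = MeasurableSpace.generateFrom p := by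
    rw [hm₂eq]
    refine le_antisymm ?_ (MeasurableSpace.generateFrom_le ?_)
    · refine sup_le ?_ ?_
      · intro u hu
        exact MeasurableSpace.measurableSet_generateFrom
          ⟨u, Set.univ, hu, MeasurableSet.univ, by simp⟩
      · rintro u ⟨tt, htt, rfl⟩
        exact MeasurableSpace.measurableSet_generateFrom
          ⟨Set.univ, tt, MeasurableSet.univ, htt, by simp⟩
    · rintro u ⟨A, tt, hA, htt, rfl⟩
      exact MeasurableSet.inter ((le_sup_left : m ≤ m ⊔ MeasurableSpace.comap g mγ) _ hA)
        ((le_sup_right : MeasurableSpace.comap g mγ ≤ m ⊔ MeasurableSpace.comap g mγ)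
          _ ⟨tt, htt, rfl⟩)
  have hpi : IsPiSystem p := by
    rintro u ⟨A, t1, hA, ht1, rfl⟩ v ⟨B, t2, hB, ht2, rfl⟩ -
    refine ⟨A ∩ B, t1 ∩ t2, hA.inter hB, ht1.inter ht2, ?_⟩
    ext x; simp only [Set.mem_inter_iff, Set.mem_preimage]; tauto
  have hint : ∀ u, MeasurableSet[m₂] u →
      ∫ x in u, (μ[f|m]) x ∂μ = ∫ x in u, f x ∂μ := by
    refine MeasurableSpace.induction_on_inter (m := m₂) hgen hpi ?_ ?_ ?_ ?_
    · simp
    · rintro u ⟨A, tt, hA, htt, rfl⟩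
      exact core hm hfm hgm hfint hCI hA htt
    · intro u hu ih
      have huΩ : MeasurableSet[mΩ] u := hm₂ _ hu
      have h1 := integral_add_compl huΩ (integrable_condExp (m := m) (μ := μ) (f := f))
      have h2 := integral_add_compl huΩ hfint
      have h3 : ∫ x, (μ[f|m]) x ∂μ = ∫ x, f x ∂μ := integral_condExp hm
      linarith
    · intro u hdisj humeas ih
      have h1 : ∀ i, MeasurableSet[mΩ] (u i) := fun i => hm₂ _ (humeas i)
      rw [integral_iUnion h1 hdisj (integrable_condExp.integrableOn),
        integral_iUnion h1 hdisj (hfint.integrableOn)]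
      exact tsum_congr ih
  exact (ae_eq_condExp_of_forall_setIntegral_eq hm₂ hfint
    (fun s _ _ => integrable_condExp.integrableOn)
    (fun s hs _ => hint s hs)
    (StronglyMeasurable.aestronglyMeasurable
      (stronglyMeasurable_condExp.mono hle1))).symm

end Stmt10Aux

open Stmt10Aux

/-- Regression identity underlying Theorem 2 part 1 (complex scenario): under the conditional
independences implied by the causal diagram of Figure 4, with `Y = β₀ + β₁·X₁ + ε₀ + ε₁ + ε₂`,
`E[Y | σ(X₁, X₂, V)] = β₀ + β₁·X₁ + E[ε₁ | σ(V)] + E[ε₂ | σ(X₂)] + E[ε₀ | σ(V, X₂)]` a.s. -/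
theorem stmt_10 {Ω : Type*} {mΩ : MeasurableSpace Ω} [StandardBorelSpace Ω]
    (μ : Measure Ω) [IsProbabilityMeasure μ] {d : ℕ}
    (X₁ X₂ : Ω → ℝ) (V : Ω → (Fin d → ℝ)) (ε₀ ε₁ ε₂ : Ω → ℝ)
    (hX₁m : Measurable X₁) (hX₂m : Measurable X₂) (hVm : Measurable V)
    (hε₀m : Measurable ε₀) (hε₁m : Measurable ε₁) (hε₂m : Measurable ε₂)
    (hX₁int : Integrable X₁ μ) (hX₂int : Integrable X₂ μ)
    (hε₀int : Integrable ε₀ μ) (hε₁int : Integrable ε₁ μ) (hε₂int : Integrable ε₂ μ)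
    (hCI₁ : CondIndepFun (MeasurableSpace.comap V inferInstance) hVm.comap_le
      ε₁ (fun ω => (X₁ ω, X₂ ω)) μ)
    (hCI₂ : CondIndepFun (MeasurableSpace.comap X₂ inferInstance) hX₂m.comap_le
      ε₂ (fun ω => (X₁ ω, V ω)) μ)
    (hCI₀ : CondIndepFun
      (MeasurableSpace.comap (fun ω => (V ω, X₂ ω)) inferInstance)
      (Measurable.comap_le (hVm.prodMk hX₂m)) ε₀ X₁ μ)
    (β₀ β₁ : ℝ) (Y : Ω → ℝ) (hY : ∀ ω, Y ω = β₀ + β₁ * X₁ ω + ε₀ ω + ε₁ ω + ε₂ ω) :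
    μ[Y | MeasurableSpace.comap (fun ω => (X₁ ω, X₂ ω, V ω)) inferInstance] =ᵐ[μ]
      fun ω => β₀ + β₁ * X₁ ω
        + (μ[ε₁ | MeasurableSpace.comap V inferInstance]) ω
        + (μ[ε₂ | MeasurableSpace.comap X₂ inferInstance]) ω
        + (μ[ε₀ | MeasurableSpace.comap (fun ω' => (V ω', X₂ ω')) inferInstance]) ω := by
  have hall : MeasurableSpace.comap (fun ω => (X₁ ω, X₂ ω, V ω)) inferInstance
      = MeasurableSpace.comap X₁ inferInstance
        ⊔ (MeasurableSpace.comap X₂ inferInstance ⊔ MeasurableSpace.comap V inferInstance) := by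
    have h1 : MeasurableSpace.comap (fun ω => (X₁ ω, X₂ ω, V ω)) inferInstance
        = MeasurableSpace.comap X₁ inferInstance
          ⊔ MeasurableSpace.comap (fun ω => (X₂ ω, V ω)) inferInstance :=
      comap_prodMk _ _
    have h2 : MeasurableSpace.comap (fun ω => (X₂ ω, V ω)) inferInstance
        = MeasurableSpace.comap X₂ inferInstance ⊔ MeasurableSpace.comap V inferInstance :=
      comap_prodMk _ _
    rw [h1, h2]
  have hEq1 : MeasurableSpace.comap (fun ω => (X₁ ω, X₂ ω, V ω)) inferInstance
      = MeasurableSpace.comap V inferInstance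
        ⊔ MeasurableSpace.comap (fun ω => (X₁ ω, X₂ ω)) inferInstance := by
    rw [hall, comap_prodMk X₁ X₂, ← sup_assoc, sup_comm]
  have hEq2 : MeasurableSpace.comap (fun ω => (X₁ ω, X₂ ω, V ω)) inferInstance
      = MeasurableSpace.comap X₂ inferInstance
        ⊔ MeasurableSpace.comap (fun ω => (X₁ ω, V ω)) inferInstance := by
    rw [hall, comap_prodMk X₁ V, sup_left_comm]
  have hEq0 : MeasurableSpace.comap (fun ω => (X₁ ω, X₂ ω, V ω)) inferInstance
      = MeasurableSpace.comap (fun ω => (V ω, X₂ ω)) inferInstance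
        ⊔ MeasurableSpace.comap X₁ inferInstance := by
    rw [hall, comap_prodMk V X₂, sup_comm,
      sup_comm (MeasurableSpace.comap X₂ inferInstance) (MeasurableSpace.comap V inferInstance)]
  have h1 : μ[ε₁ | MeasurableSpace.comap (fun ω => (X₁ ω, X₂ ω, V ω)) inferInstance]
      =ᵐ[μ] μ[ε₁ | MeasurableSpace.comap V inferInstance] :=
    condexp_sup_comap hVm.comap_le hε₁m (hX₁m.prodMk hX₂m) hε₁int hCI₁ hEq1
  have h2 : μ[ε₂ | MeasurableSpace.comap (fun ω => (X₁ ω, X₂ ω, V ω)) inferInstance]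
      =ᵐ[μ] μ[ε₂ | MeasurableSpace.comap X₂ inferInstance] :=
    condexp_sup_comap hX₂m.comap_le hε₂m (hX₁m.prodMk hVm) hε₂int hCI₂ hEq2
  have h0 : μ[ε₀ | MeasurableSpace.comap (fun ω => (X₁ ω, X₂ ω, V ω)) inferInstance]
      =ᵐ[μ] μ[ε₀ | MeasurableSpace.comap (fun ω' => (V ω', X₂ ω')) inferInstance] :=
    condexp_sup_comap (Measurable.comap_le (hVm.prodMk hX₂m)) hε₀m hX₁m hε₀int hCI₀ hEq0
  set mA : MeasurableSpace Ω :=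
    MeasurableSpace.comap (fun ω => (X₁ ω, X₂ ω, V ω)) inferInstance with hmAdef
  have hmA : mA ≤ mΩ := (hX₁m.prodMk (hX₂m.prodMk hVm)).comap_le
  have hX₁' : Measurable[mA] X₁ := by
    have h : Measurable[mA] (fun ω => (X₁ ω, X₂ ω, V ω)) := Measurable.of_comap_le le_rfl
    exact measurable_fst.comp h
  have hcint : Integrable (fun ω => β₀ + β₁ * X₁ ω) μ :=
    (integrable_const β₀).add (hX₁int.const_mul β₁)
  have hconst : μ[(fun ω => β₀ + β₁ * X₁ ω) | mA] = fun ω => β₀ + β₁ * X₁ ω :=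
    condExp_of_stronglyMeasurable hmA
      ((measurable_const.add (hX₁'.const_mul β₁)).stronglyMeasurable) hcint
  have hYfun : Y = (fun ω => β₀ + β₁ * X₁ ω) + (ε₀ + (ε₁ + ε₂)) := by
    funext ω
    simp only [Pi.add_apply]
    rw [hY ω]; ring
  have hsum1 : μ[Y | mA]
      =ᵐ[μ] μ[(fun ω => β₀ + β₁ * X₁ ω) | mA] + μ[ε₀ + (ε₁ + ε₂) | mA] := by
    rw [hYfun]
    exact condExp_add hcint (hε₀int.add (hε₁int.add hε₂int)) mA
  have hsum2 : μ[ε₀ + (ε₁ + ε₂) | mA] =ᵐ[μ] μ[ε₀ | mA] + μ[ε₁ + ε₂ | mA] :=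
    condExp_add hε₀int (hε₁int.add hε₂int) mA
  have hsum3 : μ[ε₁ + ε₂ | mA] =ᵐ[μ] μ[ε₁ | mA] + μ[ε₂ | mA] :=
    condExp_add hε₁int hε₂int mA
  filter_upwards [hsum1, hsum2, hsum3, h1, h2, h0] with ω w1 w2 w3 w4 w5 w6
  simp only [Pi.add_apply] at w1 w2 w3
  rw [w1, hconst, w2, w3, w4, w5, w6]
  ring
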